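/- Suppose p = 3 and let μ'_{ε,g}(a) denote the proportion of monic squarefree polynomials f of degree 2g + ε over F_q (q a power of 3) such that the smooth hyperelliptic curve Y^2 = f(X) has a-number a. If a > ⌈g/3⌉, then μ'_{1,g}(a) = μ'_{2,g}(a) = 0. Equivalently, every hyperelliptic curve of genus g in characteristic 3 has a-number at most ⌈g/3⌉. -/

import Mathlib

open Polynomial

section Helpers

variable {F : Type*} [Field F]

private lemma coeff_cube [CharP F 3] (p : F[X]) (m : ℕ) :
    (p ^ 3).coeff m = if 3 ∣ m then (p.coeff (m / 3)) ^ 3 else 0 := by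
  haveI : Fact (Nat.Prime 3) := ⟨by norm_num⟩
  rw [← Polynomial.map_frobenius_expand 3 p, Polynomial.coeff_map,
    Polynomial.coeff_expand (by norm_num : 0 < 3)]
  split_ifs <;> simp [frobenius_def]

private lemma coeff_decomp [CharP F 3] (a b c : F[X]) (n : ℕ) :
    (a ^ 3 + b ^ 3 * X + c ^ 3 * X ^ 2).coeff n =
      (if n % 3 = 0 then a.coeff (n / 3)
       else if n % 3 = 1 then b.coeff (n / 3)
       else c.coeff (n / 3)) ^ 3 := by
  have hb : b ^ 3 * X = b ^ 3 * X ^ 1 := by ring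
  have hA : (a ^ 3).coeff n = if 3 ∣ n then (a.coeff (n / 3)) ^ 3 else 0 := coeff_cube a n
  have hB : (b ^ 3 * X).coeff n = if 1 ≤ n then (b ^ 3).coeff (n - 1) else 0 := by
    rw [hb, coeff_mul_X_pow']
  have hC : (c ^ 3 * X ^ 2).coeff n = if 2 ≤ n then (c ^ 3).coeff (n - 2) else 0 := by
    rw [coeff_mul_X_pow']
  rw [coeff_add, coeff_add, hA, hB, hC]
  rcases (by omega : n % 3 = 0 ∨ n % 3 = 1 ∨ n % 3 = 2) with h | h | h
  · have e1 : (if 1 ≤ n then (b ^ 3).coeff (n - 1) else 0) = 0 := by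
      split_ifs with h1
      · rw [coeff_cube, if_neg (show ¬ 3 ∣ n - 1 by omega)]
      · rfl
    have e2 : (if 2 ≤ n then (c ^ 3).coeff (n - 2) else 0) = 0 := by
      split_ifs with h1
      · rw [coeff_cube, if_neg (show ¬ 3 ∣ n - 2 by omega)]
      · rfl
    rw [e1, e2, if_pos (show 3 ∣ n by omega), if_pos (show n % 3 = 0 from h)]
    ring
  · have e1 : (if 1 ≤ n then (b ^ 3).coeff (n - 1) else 0) = (b.coeff (n / 3)) ^ 3 := by
      rw [if_pos (show 1 ≤ n by omega), coeff_cube, if_pos (show 3 ∣ n - 1 by omega),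
        (show (n - 1) / 3 = n / 3 by omega)]
    have e2 : (if 2 ≤ n then (c ^ 3).coeff (n - 2) else 0) = 0 := by
      split_ifs with h1
      · rw [coeff_cube, if_neg (show ¬ 3 ∣ n - 2 by omega)]
      · rfl
    rw [e1, e2, if_neg (show ¬ 3 ∣ n by omega), if_neg (show ¬ n % 3 = 0 by omega),
      if_pos (show n % 3 = 1 from h)]
    ring
  · have e1 : (if 1 ≤ n then (b ^ 3).coeff (n - 1) else 0) = 0 := by
      split_ifs with h1
      · rw [coeff_cube, if_neg (show ¬ 3 ∣ n - 1 by omega)]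
      · rfl
    have e2 : (if 2 ≤ n then (c ^ 3).coeff (n - 2) else 0) = (c.coeff (n / 3)) ^ 3 := by
      rw [if_pos (show 2 ≤ n by omega), coeff_cube, if_pos (show 3 ∣ n - 2 by omega),
        (show (n - 2) / 3 = n / 3 by omega)]
    rw [e1, e2, if_neg (show ¬ 3 ∣ n by omega), if_neg (show ¬ n % 3 = 0 by omega),
      if_neg (show ¬ n % 3 = 1 by omega)]
    ring

private lemma decomp_facts [CharP F 3] {P a b c : F[X]}
    (hP : P = a ^ 3 + b ^ 3 * X + c ^ 3 * X ^ 2) (h0 : P ≠ 0) :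
    (a ≠ 0 → 3 * a.natDegree ≤ P.natDegree) ∧
    (b ≠ 0 → 3 * b.natDegree + 1 ≤ P.natDegree) ∧
    (c ≠ 0 → 3 * c.natDegree + 2 ≤ P.natDegree) ∧
    (P.natDegree % 3 = 0 → a ≠ 0 ∧ 3 * a.natDegree = P.natDegree) ∧
    (P.natDegree % 3 = 1 → b ≠ 0 ∧ 3 * b.natDegree + 1 = P.natDegree) ∧
    (P.natDegree % 3 = 2 → c ≠ 0 ∧ 3 * c.natDegree + 2 = P.natDegree) := by
  have hc : ∀ n : ℕ, P.coeff n =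
      (if n % 3 = 0 then a.coeff (n / 3)
       else if n % 3 = 1 then b.coeff (n / 3)
       else c.coeff (n / 3)) ^ 3 := fun n => by rw [hP, coeff_decomp]
  have ub0 : a ≠ 0 → 3 * a.natDegree ≤ P.natDegree := by
    intro ha
    apply le_natDegree_of_ne_zero
    rw [hc (3 * a.natDegree), if_pos (by omega : (3 * a.natDegree) % 3 = 0),
      (by omega : 3 * a.natDegree / 3 = a.natDegree)]
    exact pow_ne_zero _ (leadingCoeff_ne_zero.mpr ha)
  have ub1 : b ≠ 0 → 3 * b.natDegree + 1 ≤ P.natDegree := by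
    intro hb
    apply le_natDegree_of_ne_zero
    rw [hc (3 * b.natDegree + 1), if_neg (by omega), if_pos (by omega),
      (by omega : (3 * b.natDegree + 1) / 3 = b.natDegree)]
    exact pow_ne_zero _ (leadingCoeff_ne_zero.mpr hb)
  have ub2 : c ≠ 0 → 3 * c.natDegree + 2 ≤ P.natDegree := by
    intro hcne
    apply le_natDegree_of_ne_zero
    rw [hc (3 * c.natDegree + 2), if_neg (by omega), if_neg (by omega),
      (by omega : (3 * c.natDegree + 2) / 3 = c.natDegree)]
    exact pow_ne_zero _ (leadingCoeff_ne_zero.mpr hcne)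
  have hlc : P.coeff P.natDegree ≠ 0 := leadingCoeff_ne_zero.mpr h0
  refine ⟨ub0, ub1, ub2, ?_, ?_, ?_⟩
  · intro hmod
    rw [hc P.natDegree, if_pos hmod] at hlc
    have ha : a.coeff (P.natDegree / 3) ≠ 0 := fun hz => hlc (by rw [hz]; norm_num)
    have h1 : P.natDegree / 3 ≤ a.natDegree := le_natDegree_of_ne_zero ha
    have ha0 : a ≠ 0 := fun hz => ha (by simp [hz])
    exact ⟨ha0, by have := ub0 ha0; omega⟩
  · intro hmod
    rw [hc P.natDegree, if_neg (by omega), if_pos hmod] at hlc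
    have hb : b.coeff (P.natDegree / 3) ≠ 0 := fun hz => hlc (by rw [hz]; norm_num)
    have h1 : P.natDegree / 3 ≤ b.natDegree := le_natDegree_of_ne_zero hb
    have hb0 : b ≠ 0 := fun hz => hb (by simp [hz])
    exact ⟨hb0, by have := ub1 hb0; omega⟩
  · intro hmod
    rw [hc P.natDegree, if_neg (by omega), if_neg (by omega)] at hlc
    have hcc : c.coeff (P.natDegree / 3) ≠ 0 := fun hz => hlc (by rw [hz]; norm_num)
    have h1 : P.natDegree / 3 ≤ c.natDegree := le_natDegree_of_ne_zero hcc
    have hc0 : c ≠ 0 := fun hz => hcc (by simp [hz])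
    exact ⟨hc0, by have := ub2 hc0; omega⟩

/-- Two triples in the "syzygy box" cannot have a nonvanishing cross product. -/
private lemma no_indep {g ε : ℕ} (hg : 1 ≤ g) (hε : 1 ≤ ε)
    (cr : F[X]) (r : ℕ) (hr : r < 3) (hcr : 3 * cr.natDegree + r = 2 * g + ε)
    (A B A' B' : F[X]) (ja jb : ℕ) (hjab : ja + jb = r + 1)
    (hA : A ≠ 0 → 3 * A.natDegree + ja + 1 ≤ g)
    (hB : B ≠ 0 → 3 * B.natDegree + jb + 1 ≤ g)
    (hA' : A' ≠ 0 → 3 * A'.natDegree + ja + 1 ≤ g)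
    (hB' : B' ≠ 0 → 3 * B'.natDegree + jb + 1 ≤ g)
    (hdvd : cr ∣ A * B' - B * A') (hw : A * B' - B * A' ≠ 0) : False := by
  have hnd : cr.natDegree ≤ (A * B' - B * A').natDegree :=
    Polynomial.natDegree_le_of_dvd hdvd hw
  have h1 : (A * B' - B * A').natDegree ≤ max (A * B').natDegree (B * A').natDegree :=
    natDegree_sub_le _ _
  have hx : 3 * (A * B').natDegree + ja + jb + 2 ≤ 2 * g ∨ (A * B').natDegree = 0 := by
    by_cases hA0 : A = 0
    · right; rw [hA0, zero_mul, natDegree_zero]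
    by_cases hB'0 : B' = 0
    · right; rw [hB'0, mul_zero, natDegree_zero]
    left
    have := natDegree_mul_le (p := A) (q := B')
    have := hA hA0
    have := hB' hB'0
    omega
  have hy : 3 * (B * A').natDegree + ja + jb + 2 ≤ 2 * g ∨ (B * A').natDegree = 0 := by
    by_cases hB0 : B = 0
    · right; rw [hB0, zero_mul, natDegree_zero]
    by_cases hA'0 : A' = 0
    · right; rw [hA'0, mul_zero, natDegree_zero]
    left
    have := natDegree_mul_le (p := B) (q := A')
    have := hB hB0
    have := hA' hA'0
    omega
  have hm : cr.natDegree ≤ (A * B').natDegree ∨ cr.natDegree ≤ (B * A').natDegree :=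
    le_max_iff.mp (hnd.trans h1)
  omega

/-- Two nonzero decomposed polynomials with proportional triples have the same
leading residue. -/
private lemma lead_clash {A B A' B' : F[X]} {n n' ia ib : ℕ}
    (hia : ia < 3) (hib : ib < 3) (hne : ia ≠ ib)
    (hn : n % 3 = ia) (hn' : n' % 3 = ib)
    (hA : A ≠ 0) (e1 : 3 * A.natDegree + ia = n)
    (hB' : B' ≠ 0) (e2 : 3 * B'.natDegree + ib = n')
    (hB : B ≠ 0 → 3 * B.natDegree + ib ≤ n)
    (hA' : A' ≠ 0 → 3 * A'.natDegree + ia ≤ n')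
    (heq : A * B' = B * A') : False := by
  have hAB' : A * B' ≠ 0 := mul_ne_zero hA hB'
  have hBA' : B * A' ≠ 0 := heq ▸ hAB'
  have hBne : B ≠ 0 := left_ne_zero_of_mul hBA'
  have hA'ne : A' ≠ 0 := right_ne_zero_of_mul hBA'
  have hdeg : A.natDegree + B'.natDegree = B.natDegree + A'.natDegree := by
    have h := congrArg natDegree heq
    rwa [natDegree_mul hA hB', natDegree_mul hBne hA'ne] at h
  have h1 := hB hBne
  have h2 := hA' hA'ne
  omega

end Helpers

/-- In characteristic 3, every hyperelliptic curve `Y² = f(X)` of genus `g` (with `f` monic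
squarefree of degree `2g + ε`) has `a`-number at most `⌈g/3⌉`.  By Elkin's formula, writing
`f = c₀³ + c₁³X + c₂³X²`, the `a`-number is the `𝔽_q`-dimension of the space of polynomials
`Q = Q₀³ + Q₁³X + Q₂³X²` of degree `< g` with `Q₂c₀ + Q₁c₁ + Q₀c₂ = 0`. -/
theorem aNumber_le_ceil {F : Type*} [Field F] [Fintype F] [CharP F 3]
    (g ε : ℕ) (hε : ε = 1 ∨ ε = 2)
    (f c0 c1 c2 : F[X]) (hf : f.Monic) (hsq : Squarefree f)
    (hdeg : f.natDegree = 2 * g + ε)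
    (h : f = c0 ^ 3 + c1 ^ 3 * X + c2 ^ 3 * X ^ 2)
    (M : Submodule F F[X])
    (hM : (M : Set F[X]) = {Q : F[X] | Q.degree < (g : WithBot ℕ) ∧
      ∃ Q0 Q1 Q2 : F[X], Q = Q0 ^ 3 + Q1 ^ 3 * X + Q2 ^ 3 * X ^ 2 ∧
        Q2 * c0 + Q1 * c1 + Q0 * c2 = 0}) :
    Module.finrank F M ≤ (g + 2) / 3 := by
  classical
  have hmem : ∀ Q : F[X], Q ∈ M → (Q.degree < (g : WithBot ℕ) ∧
      ∃ Q0 Q1 Q2 : F[X], Q = Q0 ^ 3 + Q1 ^ 3 * X + Q2 ^ 3 * X ^ 2 ∧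
        Q2 * c0 + Q1 * c1 + Q0 * c2 = 0) := by
    intro Q hQ
    have : Q ∈ (M : Set F[X]) := hQ
    rw [hM] at this
    exact this
  by_cases htriv : ∀ Q ∈ M, Q = (0 : F[X])
  · have hbot : M = ⊥ := by
      apply le_bot_iff.mp
      intro Q hQ
      simpa using htriv Q hQ
    rw [hbot]
    simp
  push_neg at htriv
  obtain ⟨Qs, hQsM, hQs0⟩ := htriv
  obtain ⟨hQsdeg, S0, S1, S2, hSdec, hSrel⟩ := hmem Qs hQsM
  have hQsnd : Qs.natDegree < g := (natDegree_lt_iff_degree_lt hQs0).mpr hQsdeg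
  have hg : 1 ≤ g := by omega
  have hε1 : 1 ≤ ε := by rcases hε with h' | h' <;> omega
  have hf0 : f ≠ 0 := hf.ne_zero
  obtain ⟨hfa, hfb, hfc, hflead0, hflead1, hflead2⟩ := decomp_facts h hf0
  -- Bezout identity for c0, c1, c2 (they are coprime since f is squarefree)
  obtain ⟨u0, u1, u2, hu⟩ : ∃ u0 u1 u2 : F[X], u0 * c0 + u1 * c1 + u2 * c2 = 1 := by
    set d1 := EuclideanDomain.gcd c0 c1 with hd1
    set d := EuclideanDomain.gcd d1 c2 with hd
    have hdc0 : d ∣ c0 := (EuclideanDomain.gcd_dvd_left d1 c2).trans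
      (EuclideanDomain.gcd_dvd_left c0 c1)
    have hdc1 : d ∣ c1 := (EuclideanDomain.gcd_dvd_left d1 c2).trans
      (EuclideanDomain.gcd_dvd_right c0 c1)
    have hdc2 : d ∣ c2 := EuclideanDomain.gcd_dvd_right d1 c2
    have hcube : d ^ 3 ∣ f := by
      rw [h]
      exact dvd_add (dvd_add (pow_dvd_pow_of_dvd hdc0 3)
        ((pow_dvd_pow_of_dvd hdc1 3).mul_right X))
        ((pow_dvd_pow_of_dvd hdc2 3).mul_right (X ^ 2))
    have hdd : d * d ∣ f := (Dvd.intro d (by ring)).trans hcube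
    obtain ⟨v, hv⟩ := (hsq d hdd).exists_left_inv
    have e1 : d1 = c0 * EuclideanDomain.gcdA c0 c1 + c1 * EuclideanDomain.gcdB c0 c1 :=
      EuclideanDomain.gcd_eq_gcd_ab c0 c1
    have e2 : d = d1 * EuclideanDomain.gcdA d1 c2 + c2 * EuclideanDomain.gcdB d1 c2 :=
      EuclideanDomain.gcd_eq_gcd_ab d1 c2
    exact ⟨v * EuclideanDomain.gcdA d1 c2 * EuclideanDomain.gcdA c0 c1,
      v * EuclideanDomain.gcdA d1 c2 * EuclideanDomain.gcdB c0 c1,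
      v * EuclideanDomain.gcdB d1 c2,
      by linear_combination hv - v * e2 - (v * EuclideanDomain.gcdA d1 c2) * e1⟩
  -- Key step A: the cross product of the triples of any two nonzero members vanishes.
  have keyA : ∀ Q ∈ M, Q ≠ 0 → ∀ Q' ∈ M, Q' ≠ 0 →
      ∀ Q0 Q1 Q2 Q0' Q1' Q2' : F[X],
      Q = Q0 ^ 3 + Q1 ^ 3 * X + Q2 ^ 3 * X ^ 2 → Q2 * c0 + Q1 * c1 + Q0 * c2 = 0 →
      Q' = Q0' ^ 3 + Q1' ^ 3 * X + Q2' ^ 3 * X ^ 2 → Q2' * c0 + Q1' * c1 + Q0' * c2 = 0 →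
      Q1 * Q2' - Q2 * Q1' = 0 ∧ Q2 * Q0' - Q0 * Q2' = 0 ∧ Q0 * Q1' - Q1 * Q0' = 0 := by
    intro Q hQM hQ0 Q' hQ'M hQ'0 Q0 Q1 Q2 Q0' Q1' Q2' hdec hrel hdec' hrel'
    have hQnd : Q.natDegree < g := (natDegree_lt_iff_degree_lt hQ0).mpr (hmem Q hQM).1
    have hQ'nd : Q'.natDegree < g := (natDegree_lt_iff_degree_lt hQ'0).mpr (hmem Q' hQ'M).1
    obtain ⟨b0, b1, b2, -, -, -⟩ := decomp_facts hdec hQ0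
    obtain ⟨b0', b1', b2', -, -, -⟩ := decomp_facts hdec' hQ'0
    have B0 : Q0 ≠ 0 → 3 * Q0.natDegree + 0 + 1 ≤ g := fun hx => by have := b0 hx; omega
    have B1 : Q1 ≠ 0 → 3 * Q1.natDegree + 1 + 1 ≤ g := fun hx => by have := b1 hx; omega
    have B2 : Q2 ≠ 0 → 3 * Q2.natDegree + 2 + 1 ≤ g := fun hx => by have := b2 hx; omega
    have B0' : Q0' ≠ 0 → 3 * Q0'.natDegree + 0 + 1 ≤ g := fun hx => by have := b0' hx; omega
    have B1' : Q1' ≠ 0 → 3 * Q1'.natDegree + 1 + 1 ≤ g := fun hx => by have := b1' hx; omega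
    have B2' : Q2' ≠ 0 → 3 * Q2'.natDegree + 2 + 1 ≤ g := fun hx => by have := b2' hx; omega
    by_contra hcon
    have hr1 : c2 * (Q0 * Q1' - Q1 * Q0') = c0 * (Q1 * Q2' - Q2 * Q1') := by
      linear_combination Q1' * hrel - Q1 * hrel'
    have hr2 : c0 * (Q2 * Q0' - Q0 * Q2') = c1 * (Q0 * Q1' - Q1 * Q0') := by
      linear_combination Q0' * hrel - Q0 * hrel'
    have hr3 : c1 * (Q1 * Q2' - Q2 * Q1') = c2 * (Q2 * Q0' - Q0 * Q2') := by
      linear_combination Q2' * hrel - Q2 * hrel'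
    rcases (by omega : (2 * g + ε) % 3 = 0 ∨ (2 * g + ε) % 3 = 1 ∨ (2 * g + ε) % 3 = 2)
      with hm | hm | hm
    · -- top coefficient of f sits in c0
      obtain ⟨hc0ne, hc0deg⟩ := hflead0 (by rw [hdeg]; exact hm)
      have hw2 : Q0 * Q1' - Q1 * Q0' ≠ 0 := by
        intro hz
        apply hcon
        have h1 : c0 * (Q1 * Q2' - Q2 * Q1') = 0 := by linear_combination c2 * hz - hr1
        have h2 : c0 * (Q2 * Q0' - Q0 * Q2') = 0 := by linear_combination hr2 + c1 * hz
        exact ⟨(mul_eq_zero.mp h1).resolve_left hc0ne,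
          (mul_eq_zero.mp h2).resolve_left hc0ne, hz⟩
      have hdvd : c0 ∣ Q0 * Q1' - Q1 * Q0' :=
        ⟨u0 * (Q0 * Q1' - Q1 * Q0') + u1 * (Q2 * Q0' - Q0 * Q2') + u2 * (Q1 * Q2' - Q2 * Q1'),
          by linear_combination (-(Q0 * Q1' - Q1 * Q0')) * hu - u1 * hr2 + u2 * hr1⟩
      exact no_indep hg hε1 c0 0 (by norm_num) (by rw [hdeg] at hc0deg; omega)
        Q0 Q1 Q0' Q1' 0 1 (by norm_num) B0 B1 B0' B1' hdvd hw2
    · -- top coefficient of f sits in c1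
      obtain ⟨hc1ne, hc1deg⟩ := hflead1 (by rw [hdeg]; exact hm)
      have hw1 : Q2 * Q0' - Q0 * Q2' ≠ 0 := by
        intro hz
        apply hcon
        have h1 : c1 * (Q0 * Q1' - Q1 * Q0') = 0 := by linear_combination c0 * hz - hr2
        have h2 : c1 * (Q1 * Q2' - Q2 * Q1') = 0 := by linear_combination hr3 + c2 * hz
        exact ⟨(mul_eq_zero.mp h2).resolve_left hc1ne, hz,
          (mul_eq_zero.mp h1).resolve_left hc1ne⟩
      have hdvd : c1 ∣ Q2 * Q0' - Q0 * Q2' :=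
        ⟨u0 * (Q0 * Q1' - Q1 * Q0') + u1 * (Q2 * Q0' - Q0 * Q2') + u2 * (Q1 * Q2' - Q2 * Q1'),
          by linear_combination (-(Q2 * Q0' - Q0 * Q2')) * hu + u0 * hr2 - u2 * hr3⟩
      exact no_indep hg hε1 c1 1 (by norm_num) (by rw [hdeg] at hc1deg; omega)
        Q2 Q0 Q2' Q0' 2 0 (by norm_num) B2 B0 B2' B0' hdvd hw1
    · -- top coefficient of f sits in c2
      obtain ⟨hc2ne, hc2deg⟩ := hflead2 (by rw [hdeg]; exact hm)
      have hw0 : Q1 * Q2' - Q2 * Q1' ≠ 0 := by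
        intro hz
        apply hcon
        have h1 : c2 * (Q0 * Q1' - Q1 * Q0') = 0 := by linear_combination hr1 + c0 * hz
        have h2 : c2 * (Q2 * Q0' - Q0 * Q2') = 0 := by linear_combination c1 * hz - hr3
        exact ⟨hz, (mul_eq_zero.mp h2).resolve_left hc2ne,
          (mul_eq_zero.mp h1).resolve_left hc2ne⟩
      have hdvd : c2 ∣ Q1 * Q2' - Q2 * Q1' :=
        ⟨u0 * (Q0 * Q1' - Q1 * Q0') + u1 * (Q2 * Q0' - Q0 * Q2') + u2 * (Q1 * Q2' - Q2 * Q1'),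
          by linear_combination (-(Q1 * Q2' - Q2 * Q1')) * hu - u0 * hr1 + u1 * hr3⟩
      exact no_indep hg hε1 c2 2 (by norm_num) (by rw [hdeg] at hc2deg; omega)
        Q1 Q2 Q1' Q2' 1 2 (by norm_num) B1 B2 B1' B2' hdvd hw0
  -- Key step C: all nonzero members have the same degree residue mod 3.
  have keyC : ∀ Q ∈ M, Q ≠ 0 → Q.natDegree % 3 = Qs.natDegree % 3 := by
    intro Q hQM hQ0
    obtain ⟨hQdeg, Q0, Q1, Q2, hdec, hrel⟩ := hmem Q hQM
    obtain ⟨w0z, w1z, w2z⟩ := keyA Q hQM hQ0 Qs hQsM hQs0 Q0 Q1 Q2 S0 S1 S2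
      hdec hrel hSdec hSrel
    obtain ⟨cb0, cb1, cb2, l0, l1, l2⟩ := decomp_facts hdec hQ0
    obtain ⟨cb0', cb1', cb2', l0', l1', l2'⟩ := decomp_facts hSdec hQs0
    by_contra hne
    have e01 : Q0 * S1 = Q1 * S0 := by linear_combination w2z
    have e12 : Q1 * S2 = Q2 * S1 := by linear_combination w0z
    have e02 : Q0 * S2 = Q2 * S0 := by linear_combination -w1z
    rcases (by omega : Q.natDegree % 3 = 0 ∨ Q.natDegree % 3 = 1 ∨ Q.natDegree % 3 = 2)
      with h1 | h1 | h1 <;>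
    rcases (by omega : Qs.natDegree % 3 = 0 ∨ Qs.natDegree % 3 = 1 ∨ Qs.natDegree % 3 = 2)
      with h2 | h2 | h2
    · exact hne (by omega)
    · obtain ⟨hA, eA⟩ := l0 h1
      obtain ⟨hB', eB'⟩ := l1' h2
      exact lead_clash (by norm_num) (by norm_num) (by norm_num) h1 h2 hA (by omega)
        hB' (by omega) (fun hx => by have := cb1 hx; omega)
        (fun hx => by have := cb0' hx; omega) e01
    · obtain ⟨hA, eA⟩ := l0 h1
      obtain ⟨hB', eB'⟩ := l2' h2
      exact lead_clash (by norm_num) (by norm_num) (by norm_num) h1 h2 hA (by omega)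
        hB' (by omega) (fun hx => by have := cb2 hx; omega)
        (fun hx => by have := cb0' hx; omega) e02
    · obtain ⟨hA, eA⟩ := l1 h1
      obtain ⟨hB', eB'⟩ := l0' h2
      exact lead_clash (by norm_num) (by norm_num) (by norm_num) h1 h2 hA (by omega)
        hB' (by omega) (fun hx => by have := cb0 hx; omega)
        (fun hx => by have := cb1' hx; omega) e01.symm
    · exact hne (by omega)
    · obtain ⟨hA, eA⟩ := l1 h1
      obtain ⟨hB', eB'⟩ := l2' h2
      exact lead_clash (by norm_num) (by norm_num) (by norm_num) h1 h2 hA (by omega)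
        hB' (by omega) (fun hx => by have := cb2 hx; omega)
        (fun hx => by have := cb1' hx; omega) e12
    · obtain ⟨hA, eA⟩ := l2 h1
      obtain ⟨hB', eB'⟩ := l0' h2
      exact lead_clash (by norm_num) (by norm_num) (by norm_num) h1 h2 hA (by omega)
        hB' (by omega) (fun hx => by have := cb0 hx; omega)
        (fun hx => by have := cb2' hx; omega) e02.symm
    · obtain ⟨hA, eA⟩ := l2 h1
      obtain ⟨hB', eB'⟩ := l1' h2
      exact lead_clash (by norm_num) (by norm_num) (by norm_num) h1 h2 hA (by omega)
        hB' (by omega) (fun hx => by have := cb1 hx; omega)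
        (fun hx => by have := cb2' hx; omega) e12.symm
    · exact hne (by omega)
  -- Final counting: degrees of nonzero members lie in one residue class mod 3.
  set r : ℕ := Qs.natDegree % 3 with hrdef
  have hr3 : r < 3 := by omega
  set k : ℕ := (g + 2) / 3 with hkdef
  let φ : M →ₗ[F] (Fin k → F) :=
    { toFun := fun Q j => (Q : F[X]).coeff (3 * (j : ℕ) + r)
      map_add' := fun Q Q' => by funext j; simp
      map_smul' := fun a Q => by funext j; simp }
  have hφ : Function.Injective φ := by
    intro Q Q' hQQ'
    have hz : ∀ Q : M, φ Q = 0 → Q = 0 := by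
      intro Q hQ0
      by_contra hne
      have hQv : (Q : F[X]) ≠ 0 := fun hv => hne (Subtype.ext hv)
      have hmod : (Q : F[X]).natDegree % 3 = r := keyC _ Q.2 hQv
      have hnd : (Q : F[X]).natDegree < g :=
        (natDegree_lt_iff_degree_lt hQv).mpr (hmem _ Q.2).1
      have hj : (Q : F[X]).natDegree / 3 < k := by omega
      have := congrFun hQ0 ⟨(Q : F[X]).natDegree / 3, hj⟩
      simp only [φ, LinearMap.coe_mk, AddHom.coe_mk, Pi.zero_apply] at this
      rw [(by omega : 3 * ((Q : F[X]).natDegree / 3) + r = (Q : F[X]).natDegree)] at this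
      exact (leadingCoeff_ne_zero.mpr hQv) this
    have : Q - Q' = 0 := hz _ (by rw [map_sub, hQQ', sub_self])
    exact sub_eq_zero.mp this
  have hfin := LinearMap.finrank_le_finrank_of_injective hφ
  simpa [Module.finrank_fin_fun] using hfin
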